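/- For every natural number c, there exists a finite connected simple graph G whose cop number satisfies c(G) ≥ c. -/

import Mathlib

/-- A (memoryless, full-information) strategy for `k` cops on the graph `G`:
initial positions, and a move function giving the cops' next positions from the
current cop positions and robber position; each cop stays put or moves along an edge. -/
structure CopStrategy {V : Type*} (G : SimpleGraph V) (k : ℕ) where
  init : Fin k → V
  move : (Fin k → V) → V → (Fin k → V)
  valid : ∀ c r i, move c r i = c i ∨ G.Adj (c i) (move c r i)

/-- A strategy for the robber: an initial vertex chosen after seeing the cops'
initial positions, and a move function from the current positions; the robber
stays put or moves along an edge. -/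
structure RobberStrategy {V : Type*} (G : SimpleGraph V) (k : ℕ) where
  init : (Fin k → V) → V
  move : (Fin k → V) → V → V
  valid : ∀ c r, move c r = r ∨ G.Adj r (move c r)

/-- The play determined by a cop strategy and a robber strategy: at time `t`,
`(gamePlay CS RS t).1` are the cop positions and `(gamePlay CS RS t).2` is the
robber position, after both sides have moved in round `t` (cops move first). -/
def gamePlay {V : Type*} {G : SimpleGraph V} {k : ℕ} (CS : CopStrategy G k)
    (RS : RobberStrategy G k) : ℕ → (Fin k → V) × V
  | 0 => (CS.init, RS.init CS.init)
  | t + 1 =>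
      let s := gamePlay CS RS t
      let c' := CS.move s.1 s.2
      (c', RS.move c' s.2)

/-- A cop strategy is winning if against every robber strategy, at some moment some cop
occupies the robber's vertex (either right after the cops' move, while the robber is
still on its previous vertex, or after the robber's move). -/
def CopStrategy.Winning {V : Type*} {G : SimpleGraph V} {k : ℕ}
    (CS : CopStrategy G k) : Prop :=
  ∀ RS : RobberStrategy G k, ∃ t : ℕ,
    (∃ i, (gamePlay CS RS t).1 i = (gamePlay CS RS t).2) ∨
    (∃ i, CS.move (gamePlay CS RS t).1 (gamePlay CS RS t).2 i = (gamePlay CS RS t).2)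

/-- The cop number of `G`: the least `k` such that `k` cops have a winning strategy. -/
noncomputable def copNumber {V : Type*} (G : SimpleGraph V) : ℕ :=
  sInf {k | ∃ CS : CopStrategy G k, CS.Winning}


open SimpleGraph Finset

abbrev PVert (p : ℕ) := (ZMod p × ZMod p) ⊕ (ZMod p × ZMod p)

def PAdj (p : ℕ) : PVert p → PVert p → Prop
  | .inl pt, .inr li => pt.2 = li.1 * pt.1 + li.2
  | .inr li, .inl pt => pt.2 = li.1 * pt.1 + li.2
  | _, _ => False

@[simp] lemma PAdj_inl_inr (p : ℕ) (pt li : ZMod p × ZMod p) :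
    PAdj p (.inl pt) (.inr li) ↔ pt.2 = li.1 * pt.1 + li.2 := Iff.rfl
@[simp] lemma PAdj_inr_inl (p : ℕ) (pt li : ZMod p × ZMod p) :
    PAdj p (.inr li) (.inl pt) ↔ pt.2 = li.1 * pt.1 + li.2 := Iff.rfl
@[simp] lemma PAdj_inl_inl (p : ℕ) (a b : ZMod p × ZMod p) :
    ¬ PAdj p (.inl a) (.inl b) := fun h => h
@[simp] lemma PAdj_inr_inr (p : ℕ) (a b : ZMod p × ZMod p) :
    ¬ PAdj p (.inr a) (.inr b) := fun h => h

def PG (p : ℕ) : SimpleGraph (PVert p) where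
  Adj := PAdj p
  symm := ⟨by rintro (a | a) (b | b) h <;> simp_all⟩
  loopless := ⟨by rintro (a | a) h <;> exact h⟩

lemma PG_adj (p : ℕ) (a b : PVert p) : (PG p).Adj a b ↔ PAdj p a b := Iff.rfl

variable {p : ℕ} [Fact p.Prime]

lemma lines_eq {x y m1 b1 m2 b2 : ZMod p}
    (h1 : y = m1 * x + b1) (h2 : y = m2 * x + b2) (hm : m1 = m2) : b1 = b2 := by
  subst hm; linear_combination h2 - h1

/-- two points determine at most one line -/
lemma line_unique {x y x' y' m1 b1 m2 b2 : ZMod p} (hx : x ≠ x')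
    (h1 : y = m1 * x + b1) (h2 : y = m2 * x + b2)
    (h3 : y' = m1 * x' + b1) (h4 : y' = m2 * x' + b2) :
    m1 = m2 ∧ b1 = b2 := by
  have hm : m1 = m2 := by
    have h5 : (m1 - m2) * (x - x') = 0 := by linear_combination h2 + h3 - h1 - h4
    rcases mul_eq_zero.1 h5 with h | h
    · linear_combination h
    · exact absurd (by linear_combination h) hx
  exact ⟨hm, lines_eq h1 h2 hm⟩

/-- two lines meet in at most one point -/
lemma point_unique {x y x' y' m1 b1 m2 b2 : ZMod p} (hl : (m1, b1) ≠ (m2, b2))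
    (h1 : y = m1 * x + b1) (h2 : y = m2 * x + b2)
    (h3 : y' = m1 * x' + b1) (h4 : y' = m2 * x' + b2) :
    x = x' ∧ y = y' := by
  have hm : m1 ≠ m2 := by
    rintro rfl
    exact hl (by rw [lines_eq h1 h2 rfl])
  have hx : x = x' := by
    have h5 : (m1 - m2) * (x - x') = 0 := by linear_combination h2 + h3 - h1 - h4
    rcases mul_eq_zero.1 h5 with h | h
    · exact absurd (by linear_combination h) hm
    · linear_combination h
  subst hx
  exact ⟨rfl, by rw [h1, h3]⟩

/-- two distinct vertices have at most one common neighbor (no 4-cycles) -/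
lemma PG_c4free {u z w1 w2 : PVert p} (h1 : PAdj p u w1) (h2 : PAdj p u w2)
    (h3 : PAdj p z w1) (h4 : PAdj p z w2) (hw : w1 ≠ w2) : z = u := by
  rcases u with ⟨x, y⟩ | ⟨m, b⟩ <;> rcases z with ⟨x', y'⟩ | ⟨m', b'⟩ <;>
      rcases w1 with ⟨a1, c1⟩ | ⟨m1, b1⟩ <;> rcases w2 with ⟨a2, c2⟩ | ⟨m2, b2⟩ <;>
      try (first | exact h1.elim | exact h2.elim | exact h3.elim | exact h4.elim)
  · -- u z points; w1 w2 lines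
    simp only [PAdj_inl_inr] at h1 h2 h3 h4
    have hl : (m1, b1) ≠ (m2, b2) := fun h => hw (by rw [h])
    obtain ⟨ha, hc⟩ := point_unique hl h1 h2 h3 h4
    rw [ha, hc]
  · -- u z lines; w1 w2 points
    simp only [PAdj_inr_inl] at h1 h2 h3 h4
    by_cases hx : a1 = a2
    · subst hx
      exact absurd (by rw [h1.trans h2.symm]) hw
    · obtain ⟨hm, hb⟩ := line_unique hx h1 h3 h2 h4
      rw [hm, hb]

instance instNeZeroOfFactPrime : NeZero p := ⟨(Fact.out : p.Prime).ne_zero⟩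

/-- parametrization of the neighbors of a vertex -/
def nbmap (p : ℕ) (v : PVert p) (t : ZMod p) : PVert p :=
  match v with
  | .inl pt => .inr (t, pt.2 - t * pt.1)
  | .inr li => .inl (t, li.1 * t + li.2)

@[simp] lemma nbmap_inl (pt : ZMod p × ZMod p) (t : ZMod p) :
    nbmap p (.inl pt) t = .inr (t, pt.2 - t * pt.1) := rfl
@[simp] lemma nbmap_inr (li : ZMod p × ZMod p) (t : ZMod p) :
    nbmap p (.inr li) t = .inl (t, li.1 * t + li.2) := rfl

lemma nbmap_adj (v : PVert p) (t : ZMod p) : PAdj p v (nbmap p v t) := by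
  rcases v with ⟨x, y⟩ | ⟨m, b⟩ <;> simp <;> ring

lemma nbmap_inj (v : PVert p) : Function.Injective (nbmap p v) := by
  rcases v with ⟨x, y⟩ | ⟨m, b⟩ <;> intro t1 t2 h <;> simp at h <;> exact h.1

lemma adj_eq_nbmap {v w : PVert p} (h : PAdj p v w) : ∃ t, w = nbmap p v t := by
  rcases v with ⟨x, y⟩ | ⟨m, b⟩ <;> rcases w with ⟨a, c⟩ | ⟨m', b'⟩ <;>
    first
      | exact h.elim
      | · simp only [PAdj_inl_inr] at h
          exact ⟨m', by simp; linear_combination -h⟩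
      | · simp only [PAdj_inr_inl] at h
          exact ⟨a, by simp [h]⟩

open scoped Classical in
/-- the closed neighborhood of a vertex, as a Finset -/
noncomputable def nbhd (p : ℕ) [NeZero p] (v : PVert p) : Finset (PVert p) :=
  Finset.univ.filter (fun w => w = v ∨ PAdj p v w)

open scoped Classical in
lemma mem_nbhd {v w : PVert p} : w ∈ nbhd p v ↔ (w = v ∨ PAdj p v w) := by
  simp [nbhd]

lemma nbhd_card (v : PVert p) : (nbhd p v).card ≤ p + 1 := by
  classical
  have hsub : nbhd p v ⊆ insert v ((Finset.univ : Finset (ZMod p)).image (nbmap p v)) := by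
    intro w hw
    rcases mem_nbhd.1 hw with h | h
    · rw [h]; exact Finset.mem_insert_self _ _
    · obtain ⟨t, rfl⟩ := adj_eq_nbmap h
      exact Finset.mem_insert_of_mem (Finset.mem_image.2 ⟨t, Finset.mem_univ _, rfl⟩)
  calc (nbhd p v).card ≤ _ := Finset.card_le_card hsub
    _ ≤ _ + 1 := Finset.card_insert_le _ _
    _ ≤ p + 1 := by
        have := Finset.card_image_le (s := (Finset.univ : Finset (ZMod p))) (f := nbmap p v)
        simp only [Finset.card_univ, ZMod.card] at this
        omega

open scoped Classical in
/-- the open neighborhood -/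
noncomputable def onbhd (p : ℕ) [NeZero p] (v : PVert p) : Finset (PVert p) :=
  Finset.univ.filter (fun w => PAdj p v w)

open scoped Classical in
lemma mem_onbhd {v w : PVert p} : w ∈ onbhd p v ↔ PAdj p v w := by simp [onbhd]

lemma onbhd_card (v : PVert p) : p ≤ (onbhd p v).card := by
  classical
  have hsub : ((Finset.univ : Finset (ZMod p)).image (nbmap p v)) ⊆ onbhd p v := by
    intro w hw
    obtain ⟨t, -, rfl⟩ := Finset.mem_image.1 hw
    exact mem_onbhd.2 (nbmap_adj v t)
  calc p = ((Finset.univ : Finset (ZMod p)).image (nbmap p v)).card := by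
        rw [Finset.card_image_of_injective _ (nbmap_inj v)]; simp [ZMod.card]
    _ ≤ _ := Finset.card_le_card hsub

lemma no_triangle {u w1 w2 : PVert p} (h1 : PAdj p u w1) (h2 : PAdj p u w2) :
    ¬ PAdj p w1 w2 := by
  rcases u with u | u <;> rcases w1 with w1 | w1 <;> rcases w2 with w2 | w2 <;>
    first
      | exact h1.elim | exact h2.elim
      | exact fun h => h

lemma block_unique {u z w1 w2 : PVert p} (hu1 : PAdj p u w1) (hu2 : PAdj p u w2)
    (hw : w1 ≠ w2) (hz : z ≠ u) (hb1 : z = w1 ∨ PAdj p z w1)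
    (hb2 : z = w2 ∨ PAdj p z w2) : False := by
  rcases hb1 with rfl | hb1
  · rcases hb2 with rfl | hb2
    · exact hw rfl
    · exact no_triangle hu1 hu2 hb2
  · rcases hb2 with rfl | hb2
    · exact no_triangle hu2 hu1 hb1
    · exact hz (PG_c4free hu1 hu2 hb1 hb2 hw)

lemma card_PVert : Fintype.card (PVert p) = 2 * p ^ 2 := by
  simp [ZMod.card]; ring

lemma exists_safe {k : ℕ} (hk : k + 1 ≤ p) (cv : Fin k → PVert p) :
    ∃ v, ∀ i, cv i ≠ v ∧ ¬ PAdj p (cv i) v := by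
  classical
  by_contra hcon
  push_neg at hcon
  have hsub : (Finset.univ : Finset (PVert p)) ⊆
      Finset.univ.biUnion (fun i => nbhd p (cv i)) := by
    intro v _
    obtain ⟨i, hi⟩ := hcon v
    refine Finset.mem_biUnion.2 ⟨i, Finset.mem_univ _, mem_nbhd.2 ?_⟩
    by_cases h : cv i = v
    · exact Or.inl h.symm
    · exact Or.inr (hi h)
  have hcard := Finset.card_le_card hsub
  have h1 : (Finset.univ.biUnion (fun i => nbhd p (cv i))).card ≤ k * (p + 1) := by
    calc _ ≤ ∑ i : Fin k, (nbhd p (cv i)).card := Finset.card_biUnion_le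
      _ ≤ ∑ _i : Fin k, (p + 1) := Finset.sum_le_sum (fun i _ => nbhd_card (cv i))
      _ = k * (p + 1) := by simp [Finset.sum_const, mul_comm]
  rw [Finset.card_univ, card_PVert] at hcard
  nlinarith

lemma exists_safe_nbr {k : ℕ} (hk : k + 1 ≤ p) (cv : Fin k → PVert p) (u : PVert p)
    (hc : ∀ i, cv i ≠ u) :
    ∃ w, PAdj p u w ∧ ∀ i, cv i ≠ w ∧ ¬ PAdj p (cv i) w := by
  classical
  by_contra hcon
  push_neg at hcon
  -- every neighbor of u is blocked by some cop
  have hblocked : ∀ w ∈ onbhd p u, ∃ i, cv i = w ∨ PAdj p (cv i) w := by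
    intro w hw
    obtain ⟨i, hi⟩ := hcon w (mem_onbhd.1 hw)
    by_cases h : cv i = w
    · exact ⟨i, Or.inl h⟩
    · exact ⟨i, Or.inr (hi h)⟩
  have hk0 : 0 < k := by
    rcases Nat.eq_zero_or_pos k with rfl | h
    · obtain ⟨i, -⟩ := hblocked (nbmap p u 0) (mem_onbhd.2 (nbmap_adj u 0))
      exact i.elim0
    · exact h
  haveI : Nonempty (Fin k) := ⟨⟨0, hk0⟩⟩
  set f : PVert p → Fin k := fun w =>
    if h : ∃ i, cv i = w ∨ PAdj p (cv i) w then h.choose else Classical.arbitrary _ with hf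
  have hinj : Set.InjOn f (onbhd p u) := by
    intro w1 hw1 w2 hw2 heq
    by_contra hne
    have h1 := hblocked w1 hw1
    have h2 := hblocked w2 hw2
    rw [hf] at heq
    simp only [dif_pos h1, dif_pos h2] at heq
    have s1 := h1.choose_spec
    have s2 := h2.choose_spec
    rw [heq] at s1
    exact block_unique (mem_onbhd.1 hw1) (mem_onbhd.1 hw2) hne
      (hc h2.choose) s1 s2
  have hcard : (onbhd p u).card ≤ k := by
    have := Finset.card_le_card_of_injOn f (fun w _ => Finset.mem_univ (f w)) hinj
    simpa using this
  have := onbhd_card u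
  omega

lemma reach_pt {x y x' y' : ZMod p} (h : x ≠ x') :
    (PG p).Reachable (.inl (x, y)) (.inl (x', y')) := by
  set m : ZMod p := (y' - y) * (x' - x)⁻¹ with hm
  set b : ZMod p := y - m * x with hb
  have h1 : (PG p).Adj (.inl (x, y)) (.inr (m, b)) := by
    rw [PG_adj]
    simp [hb]
  have h2 : (PG p).Adj (.inr (m, b)) (.inl (x', y')) := by
    rw [PG_adj]
    simp only [PAdj_inr_inl]
    have hx : x' - x ≠ 0 := sub_ne_zero.2 (Ne.symm h)
    have : m * (x' - x) = y' - y := by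
      rw [hm, mul_assoc, inv_mul_cancel₀ hx, mul_one]
    rw [hb]
    linear_combination -this
  exact (h1.reachable).trans h2.reachable

lemma reach_base (v : PVert p) : (PG p).Reachable (.inl (0, 0)) v := by
  have hp2 : (1 : ZMod p) ≠ 0 := one_ne_zero
  have hpt : ∀ x y : ZMod p, (PG p).Reachable (.inl (0, 0)) (.inl (x, y)) := by
    intro x y
    by_cases hx : x = 0
    · subst hx
      exact (reach_pt hp2.symm).trans (reach_pt (p := p) (y := (0:ZMod p)) (y' := y) hp2)
    · exact reach_pt (Ne.symm hx)
  rcases v with ⟨x, y⟩ | ⟨m, b⟩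
  · exact hpt x y
  · refine (hpt 0 b).trans ?_
    have : (PG p).Adj (.inl (0, b)) (.inr (m, b)) := by
      rw [PG_adj]; simp
    exact this.reachable

lemma PG_conn : (PG p).Connected := by
  rw [SimpleGraph.connected_iff]
  refine ⟨fun u v => (reach_base u).symm.trans (reach_base v), ⟨.inl (0, 0)⟩⟩

section Game

variable {p : ℕ} [Fact p.Prime]

/-- the robber position `v` is safe w.r.t. cop positions `cv` -/
def PSafe {p k : ℕ} (cv : Fin k → PVert p) (v : PVert p) : Prop :=
  ∀ i, cv i ≠ v ∧ ¬ PAdj p (cv i) v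

/-- the evading robber strategy -/
noncomputable def evadeRS {k : ℕ} (hk : k + 1 ≤ p) : RobberStrategy (PG p) k where
  init cv := (exists_safe hk cv).choose
  move cv r := if h : ∀ i, cv i ≠ r then (exists_safe_nbr hk cv r h).choose else r
  valid cv r := by
    by_cases h : ∀ i, cv i ≠ r
    · right
      simp only [dif_pos h]
      exact ((exists_safe_nbr hk cv r h).choose_spec).1
    · left
      simp only [dif_neg h]

lemma evadeRS_move {k : ℕ} (hk : k + 1 ≤ p) (cv : Fin k → PVert p) (r : PVert p)
    (h : ∀ i, cv i ≠ r) :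
    (evadeRS hk).move cv r = (exists_safe_nbr hk cv r h).choose := by
  simp only [evadeRS]
  exact dif_pos h

lemma cops_stay_away {k : ℕ} {cv : Fin k → PVert p} {cv' : Fin k → PVert p} {r : PVert p}
    (hsafe : PSafe cv r) (hmv : ∀ i, cv' i = cv i ∨ (PG p).Adj (cv i) (cv' i)) :
    ∀ i, cv' i ≠ r := by
  intro i h
  rcases hmv i with h' | h'
  · exact (hsafe i).1 (by rw [← h', h])
  · rw [h] at h'
    exact (hsafe i).2 h'

lemma evade_invariant {k : ℕ} (hk : k + 1 ≤ p) (CS : CopStrategy (PG p) k) (t : ℕ) :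
    PSafe (gamePlay CS (evadeRS hk) t).1 (gamePlay CS (evadeRS hk) t).2 := by
  induction t with
  | zero =>
      show PSafe CS.init ((evadeRS hk).init CS.init)
      exact (exists_safe hk CS.init).choose_spec
  | succ t ih =>
      have hne : ∀ i, CS.move (gamePlay CS (evadeRS hk) t).1 (gamePlay CS (evadeRS hk) t).2 i
          ≠ (gamePlay CS (evadeRS hk) t).2 :=
        cops_stay_away ih (CS.valid _ _)
      show PSafe (CS.move _ _)
        ((evadeRS hk).move (CS.move (gamePlay CS (evadeRS hk) t).1 (gamePlay CS (evadeRS hk) t).2)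
          (gamePlay CS (evadeRS hk) t).2)
      rw [evadeRS_move hk _ _ hne]
      intro i
      exact ((exists_safe_nbr hk _ _ hne).choose_spec).2 i

lemma no_winning_strategy {k : ℕ} (hk : k + 1 ≤ p) (CS : CopStrategy (PG p) k) :
    ¬ CS.Winning := by
  intro hwin
  obtain ⟨t, hcase | hcase⟩ := hwin (evadeRS hk)
  · obtain ⟨i, h⟩ := hcase
    exact (evade_invariant hk CS t i).1 h
  · obtain ⟨i, h⟩ := hcase
    exact cops_stay_away (evade_invariant hk CS t) (CS.valid _ _) i h

/-- with one cop per vertex, the cops win immediately -/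
noncomputable def allCops (p : ℕ) [Fact p.Prime] :
    CopStrategy (PG p) (Fintype.card (PVert p)) where
  init i := (Fintype.equivFin (PVert p)).symm i
  move cv _ := cv
  valid _ _ _ := Or.inl rfl

lemma allCops_winning : (allCops p).Winning := by
  intro RS
  refine ⟨0, Or.inl ⟨Fintype.equivFin (PVert p) ((gamePlay (allCops p) RS 0).2), ?_⟩⟩
  show (allCops p).init _ = _
  simp [allCops]

end Game

/-- For every natural number `c`, there exists a finite connected simple graph whose
cop number is at least `c`. -/
theorem exists_graph_copnumber_ge (c : ℕ) :
    ∃ (V : Type) (_ : Fintype V) (G : SimpleGraph V),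
      G.Connected ∧ c ≤ copNumber G := by
  obtain ⟨p, hpc, hp⟩ := Nat.exists_infinite_primes c
  haveI : Fact p.Prime := ⟨hp⟩
  refine ⟨PVert p, inferInstance, PG p, PG_conn, ?_⟩
  have hne : {k | ∃ CS : CopStrategy (PG p) k, CS.Winning}.Nonempty :=
    ⟨Fintype.card (PVert p), allCops p, allCops_winning⟩
  have hmem := Nat.sInf_mem hne
  by_contra hlt
  push_neg at hlt
  obtain ⟨CS, hCS⟩ := hmem
  have h2 : sInf {k | ∃ CS : CopStrategy (PG p) k, CS.Winning} < c := hlt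
  exact no_winning_strategy (by omega : sInf {k | ∃ CS : CopStrategy (PG p) k, CS.Winning} + 1 ≤ p)
    CS hCS
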